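/- Let M be an S×F real matrix with nonnegative entries, each row summing to 1, and no zero column, with Z = diag(1ᵀM) and Σ_F = M Z^{-1} Mᵀ invertible. Let v ∈ ℝ^S and define x = Z^{-1} Mᵀ Σ_F^{-1} v. Then M x = v. Moreover: (1) if vᵀ Σ_F^{-1} v ≤ C_V (L2 outcome coverage) and every column u_f of M satisfies (u_f/Z_f)ᵀ Σ_F^{-1} (u_f/Z_f) ≤ C_U (Σ_F regularity), then ‖x‖_∞ ≤ sqrt(C_V · C_U); (2) under only the assumption vᵀ Σ_F^{-1} v ≤ C_V, the weighted norm satisfies ‖x‖_Z := sqrt(xᵀ Z x) ≤ sqrt(C_V). -/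

import Mathlib

open Matrix

/-- The weighted outcome covariance matrix `Σ_F = M Z⁻¹ Mᵀ`, where
`Z = diag(1ᵀ M)` is the diagonal matrix of column sums of `M`. -/
noncomputable def SigmaF {S F : Type} [Fintype S] [Fintype F] [DecidableEq F]
    (M : Matrix S F ℝ) : Matrix S S ℝ :=
  M * Matrix.diagonal (fun f => (∑ s, M s f)⁻¹) * Mᵀ

/-- The minimum-`Z`-weighted-norm solution `x = Z⁻¹ Mᵀ Σ_F⁻¹ v`. -/
noncomputable def minWNormSol {S F : Type} [Fintype S] [Fintype F] [DecidableEq S]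
    [DecidableEq F] (M : Matrix S F ℝ) (v : S → ℝ) : F → ℝ :=
  (Matrix.diagonal (fun f => (∑ s, M s f)⁻¹) * Mᵀ * (SigmaF M)⁻¹).mulVec v

open scoped MatrixOrder in
/-- Cauchy–Schwarz for a positive semidefinite real matrix. -/
lemma psd_cauchy_schwarz {n : Type} [Fintype n] [DecidableEq n] {A : Matrix n n ℝ}
    (hA : A.PosSemidef) (x y : n → ℝ) :
    (x ⬝ᵥ A.mulVec y) ^ 2 ≤ (x ⬝ᵥ A.mulVec x) * (y ⬝ᵥ A.mulVec y) := by
  obtain ⟨B, rfl⟩ := CStarAlgebra.nonneg_iff_eq_star_mul_self.mp hA.nonneg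
  simp only [Matrix.star_eq_conjTranspose]
  have key : ∀ a b : n → ℝ, a ⬝ᵥ (Bᴴ * B).mulVec b = (B.mulVec a) ⬝ᵥ (B.mulVec b) := by
    intro a b
    rw [← Matrix.mulVec_mulVec, Matrix.dotProduct_mulVec,
      Matrix.conjTranspose_eq_transpose_of_trivial, Matrix.vecMul_transpose]
  rw [key, key, key]
  simpa [dotProduct, pow_two] using
    Finset.sum_mul_sq_le_sq_mul_sq Finset.univ (B.mulVec x) (B.mulVec y)

theorem stmt5 (S F : Type) [Fintype S] [Fintype F] [DecidableEq S] [DecidableEq F]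
    (M : Matrix S F ℝ)
    (hnn : ∀ s f, 0 ≤ M s f)
    (hrow : ∀ s, ∑ f, M s f = 1)
    (hcol : ∀ f, ∃ s, M s f ≠ 0)
    (hdet : IsUnit (SigmaF M).det)
    (v : S → ℝ) (CV CU : ℝ) :
    M.mulVec (minWNormSol M v) = v ∧
    ((v ⬝ᵥ ((SigmaF M)⁻¹).mulVec v ≤ CV ∧
        ∀ f, (fun s => M s f / ∑ s', M s' f) ⬝ᵥ
            ((SigmaF M)⁻¹).mulVec (fun s => M s f / ∑ s', M s' f) ≤ CU) →
      ∀ f, |minWNormSol M v f| ≤ Real.sqrt (CV * CU)) ∧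
    (v ⬝ᵥ ((SigmaF M)⁻¹).mulVec v ≤ CV →
      Real.sqrt (∑ f, (∑ s, M s f) * minWNormSol M v f ^ 2) ≤ Real.sqrt CV) := by
  classical
  set Z : F → ℝ := fun f => ∑ s, M s f with hZdef
  have hZpos : ∀ f, 0 < Z f := by
    intro f
    obtain ⟨s, hs⟩ := hcol f
    exact Finset.sum_pos' (fun i _ => hnn i f)
      ⟨s, Finset.mem_univ s, lt_of_le_of_ne (hnn s f) (Ne.symm hs)⟩
  set D : Matrix F F ℝ := Matrix.diagonal (fun f => (Z f)⁻¹) with hDdef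
  set Sg : Matrix S S ℝ := SigmaF M with hSgdef
  have hSgeq : Sg = M * D * Mᵀ := rfl
  have hSgpsd : Sg.PosSemidef := by
    have hD : D.PosSemidef := Matrix.posSemidef_diagonal_iff.mpr
      (fun f => inv_nonneg.mpr (hZpos f).le)
    have := hD.mul_mul_conjTranspose_same M
    rwa [Matrix.conjTranspose_eq_transpose_of_trivial, ← hSgeq] at this
  have hinvpsd : Sg⁻¹.PosSemidef := hSgpsd.inv
  set w : S → ℝ := Sg⁻¹.mulVec v with hwdef
  -- M x = v
  have hMx : M.mulVec (minWNormSol M v) = v := by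
    show M.mulVec ((D * Mᵀ * Sg⁻¹).mulVec v) = v
    rw [Matrix.mulVec_mulVec, ← Matrix.mul_assoc, ← Matrix.mul_assoc, ← hSgeq,
      Matrix.mul_nonsing_inv _ hdet, Matrix.one_mulVec]
  -- formula for x f
  have hxf : ∀ f, minWNormSol M v f = (Z f)⁻¹ * ∑ s, M s f * w s := by
    intro f
    show (D * Mᵀ * Sg⁻¹).mulVec v f = _
    rw [Matrix.mul_assoc, ← Matrix.mulVec_mulVec, ← Matrix.mulVec_mulVec,
      Matrix.mulVec_diagonal]
    congr 1
  have hxf' : ∀ f, minWNormSol M v f =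
      (fun s => M s f / Z f) ⬝ᵥ Sg⁻¹.mulVec v := by
    intro f
    rw [hxf f, Finset.mul_sum]
    simp only [dotProduct, ← hwdef]
    refine Finset.sum_congr rfl fun s _ => ?_
    rw [div_eq_mul_inv]
    ring
  refine ⟨hMx, ?_, ?_⟩
  · rintro ⟨hV, hU⟩ f
    have hcs := psd_cauchy_schwarz hinvpsd (fun s => M s f / Z f) v
    have ha0 : 0 ≤ (fun s => M s f / Z f) ⬝ᵥ Sg⁻¹.mulVec (fun s => M s f / Z f) :=
      by simpa using hinvpsd.dotProduct_mulVec_nonneg (fun s => M s f / Z f)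
    have hv0 : 0 ≤ v ⬝ᵥ Sg⁻¹.mulVec v := by simpa using hinvpsd.dotProduct_mulVec_nonneg v
    have hsq : (minWNormSol M v f) ^ 2 ≤ CV * CU := by
      rw [hxf' f]
      calc ((fun s => M s f / Z f) ⬝ᵥ Sg⁻¹.mulVec v) ^ 2
          ≤ ((fun s => M s f / Z f) ⬝ᵥ Sg⁻¹.mulVec (fun s => M s f / Z f)) *
            (v ⬝ᵥ Sg⁻¹.mulVec v) := hcs
        _ ≤ CU * CV := mul_le_mul (hU f) hV hv0 (le_trans ha0 (hU f))
        _ = CV * CU := mul_comm _ _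
    calc |minWNormSol M v f| = Real.sqrt ((minWNormSol M v f) ^ 2) :=
          (Real.sqrt_sq_eq_abs _).symm
      _ ≤ Real.sqrt (CV * CU) := Real.sqrt_le_sqrt hsq
  · intro hV
    have hkey : ∑ f, Z f * minWNormSol M v f ^ 2 = v ⬝ᵥ Sg⁻¹.mulVec v := by
      have h1 : ∀ f, Z f * minWNormSol M v f ^ 2
          = (Z f)⁻¹ * (∑ s, M s f * w s) ^ 2 := by
        intro f
        rw [hxf f]
        have hz := (hZpos f).ne'
        field_simp
      have h2 : v ⬝ᵥ Sg⁻¹.mulVec v = w ⬝ᵥ v := by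
        rw [← hwdef, dotProduct_comm]
      have h3 : w ⬝ᵥ v = ∑ f, (Z f)⁻¹ * (∑ s, M s f * w s) ^ 2 := by
        have hv : v = Sg.mulVec w := by
          rw [hwdef, Matrix.mulVec_mulVec, Matrix.mul_nonsing_inv _ hdet,
            Matrix.one_mulVec]
        rw [hv, hSgeq]
        rw [Matrix.mul_assoc, ← Matrix.mulVec_mulVec, ← Matrix.mulVec_mulVec]
        simp only [dotProduct, Matrix.mulVec, hDdef, Matrix.diagonal_apply,
          ite_mul, zero_mul, Finset.sum_ite_eq, Finset.mem_univ, if_true,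
          Matrix.transpose_apply]
        simp_rw [Finset.mul_sum]
        rw [Finset.sum_comm]
        refine Finset.sum_congr rfl fun f _ => ?_
        rw [pow_two, Finset.sum_mul_sum, Finset.mul_sum]
        simp_rw [Finset.mul_sum]
        refine Finset.sum_congr rfl fun x _ => Finset.sum_congr rfl fun i _ => ?_
        ring
      simp_rw [h1, h2, h3]
    rw [show (∑ f, (∑ s, M s f) * minWNormSol M v f ^ 2) = ∑ f, Z f * minWNormSol M v f ^ 2 from rfl,
      hkey]
    exact Real.sqrt_le_sqrt hV
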